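/- Let L be a finite-dimensional nilpotent Lie algebra over a field 𝔽 of characteristic different from 2 such that dim Z₂(L) − dim Z(L) = 2 and Z(L) = L^k (the k-th term of the lower central series of L) for some k ≥ 1. Then for any two commuting automorphisms α and β of L, the composite β ∘ α is a commuting automorphism of L. -/

import Mathlib

/-- The second center `Z₂(L) = {x ∈ L : ⁅x, y⁆ ∈ Z(L) for all y ∈ L}` of a Lie algebra `L`,
as a Lie subalgebra of `L`. -/
def secondCenter (F L : Type*) [Field F] [LieRing L] [LieAlgebra F L] : LieSubalgebra F L where
  carrier := {x : L | ∀ y : L, ⁅x, y⁆ ∈ LieAlgebra.center F L}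
  add_mem' := fun {a b} ha hb y => by
    rw [add_lie]; exact add_mem (ha y) (hb y)
  zero_mem' := fun y => by rw [zero_lie]; exact zero_mem _
  smul_mem' := fun c {x} hx y => by
    rw [smul_lie]; exact Submodule.smul_mem _ c (hx y)
  lie_mem' := fun {a b} ha hb y => by
    have h1 : ⁅a, ⁅b, y⁆⁆ = 0 := (LieModule.mem_maxTrivSubmodule F L L ⁅b, y⁆).mp (hb y) a
    have h2 : ⁅b, ⁅a, y⁆⁆ = 0 := (LieModule.mem_maxTrivSubmodule F L L ⁅a, y⁆).mp (ha y) b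
    have h3 : ⁅⁅a, b⁆, y⁆ = 0 := by rw [lie_lie, h1, h2, sub_zero]
    rw [h3]; exact zero_mem _

section CommutingAutAux

variable {F L : Type*} [Field F] [LieRing L] [LieAlgebra F L]

private lemma ca_pol (γ : L ≃ₗ⁅F⁆ L) (hγ : ∀ x : L, ⁅γ x, x⁆ = 0) (a b : L) :
    ⁅γ a, b⁆ = ⁅a, γ b⁆ := by
  have h := hγ (a + b)
  have hadd : γ (a + b) = γ a + γ b := γ.toLinearEquiv.map_add a b
  rw [hadd, add_lie, lie_add, lie_add, hγ a, hγ b] at h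
  have h2 : ⁅γ a, b⁆ + ⁅γ b, a⁆ = 0 := by
    rw [← h]; abel
  rw [eq_neg_of_add_eq_zero_left h2, lie_skew]

/-- `⁅Cx, b⁆ = ⁅x, Cb⁆` for `C = γ - 1`. -/
private lemma ca_iC (γ : L ≃ₗ⁅F⁆ L) (hγ : ∀ x : L, ⁅γ x, x⁆ = 0) (a b : L) :
    ⁅γ a - a, b⁆ = ⁅a, γ b - b⁆ := by
  rw [sub_lie, lie_sub, ca_pol γ hγ a b]

/-- Lemma 1: `⁅x, ⁅Cx, z⁆⁆ = 0`. -/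
private lemma ca_L1 (γ : L ≃ₗ⁅F⁆ L) (hγ : ∀ x : L, ⁅γ x, x⁆ = 0) (x z : L) :
    ⁅x, ⁅γ x - x, z⁆⁆ = 0 := by
  obtain ⟨y, rfl⟩ : ∃ y, γ y = z := ⟨γ.symm z, γ.apply_symm_apply z⟩
  have a1 : ⁅γ x, γ y⁆ = γ ⁅x, y⁆ := (LieEquiv.map_lie γ x y).symm
  have b1 : ⁅x, γ ⁅x, y⁆⁆ = ⁅γ x, ⁅x, y⁆⁆ := (ca_pol γ hγ x ⁅x, y⁆).symm
  have c1 : ⁅γ x, ⁅x, y⁆⁆ = ⁅x, ⁅γ x, y⁆⁆ := by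
    rw [leibniz_lie (γ x) x y, hγ x, zero_lie, zero_add]
  have d1 : ⁅x, γ y⁆ = ⁅γ x, y⁆ := (ca_pol γ hγ x y).symm
  rw [sub_lie, lie_sub, a1, b1, c1, d1, sub_self]

/-- Polarized Lemma 1. -/
private lemma ca_L2 (γ : L ≃ₗ⁅F⁆ L) (hγ : ∀ x : L, ⁅γ x, x⁆ = 0) (x y z : L) :
    ⁅x, ⁅γ y - y, z⁆⁆ = -⁅y, ⁅γ x - x, z⁆⁆ := by
  have h := ca_L1 γ hγ (x + y) z
  have hadd : γ (x + y) - (x + y) = (γ x - x) + (γ y - y) := by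
    have e : γ (x + y) = γ x + γ y := γ.toLinearEquiv.map_add x y
    rw [e]; abel
  rw [hadd] at h
  simp only [add_lie, lie_add] at h
  rw [ca_L1 γ hγ x z, ca_L1 γ hγ y z] at h
  have h2 : ⁅x, ⁅γ y - y, z⁆⁆ + ⁅y, ⁅γ x - x, z⁆⁆ = 0 := by rw [← h]; abel
  exact eq_neg_of_add_eq_zero_left h2

/-- Antisymmetry of `(x, y) ↦ ⁅x, ⁅y, Cw⁆⁆`. -/
private lemma ca_AS (γ : L ≃ₗ⁅F⁆ L) (hγ : ∀ x : L, ⁅γ x, x⁆ = 0) (w x y : L) :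
    ⁅x, ⁅y, γ w - w⁆⁆ = -⁅y, ⁅x, γ w - w⁆⁆ := by
  have h := ca_L2 γ hγ x y w
  rwa [ca_iC γ hγ y w, ca_iC γ hγ x w] at h

/-- The key identity F : `⁅Cz, ⁅a, m⁆⁆ = 2 ⁅⁅Cz, a⁆, m⁆`. -/
private lemma ca_F (γ : L ≃ₗ⁅F⁆ L) (hγ : ∀ x : L, ⁅γ x, x⁆ = 0) (z a m : L) :
    ⁅γ z - z, ⁅a, m⁆⁆ = ⁅⁅γ z - z, a⁆, m⁆ + ⁅⁅γ z - z, a⁆, m⁆ := by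
  have h1 : ⁅a, ⁅γ z - z, m⁆⁆ = ⁅⁅γ z - z, a⁆, m⁆ := by
    have s2 : ⁅a, ⁅m, γ z - z⁆⁆ = -⁅m, ⁅a, γ z - z⁆⁆ := ca_AS γ hγ z a m
    calc ⁅a, ⁅γ z - z, m⁆⁆ = -⁅a, ⁅m, γ z - z⁆⁆ := by
          rw [(lie_skew (γ z - z) m).symm, lie_neg]
      _ = -(-⁅m, ⁅a, γ z - z⁆⁆) := by rw [s2]
      _ = ⁅m, ⁅a, γ z - z⁆⁆ := neg_neg _
      _ = -⁅m, ⁅γ z - z, a⁆⁆ := by rw [(lie_skew a (γ z - z)).symm, lie_neg]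
      _ = ⁅⁅γ z - z, a⁆, m⁆ := lie_skew _ _
  rw [leibniz_lie (γ z - z) a m, h1]

end CommutingAutAux

section CommutingAutAux2

variable {F L : Type*} [Field F] [LieRing L] [LieAlgebra F L]

/-- Cancellation of doubling, valid in characteristic `≠ 2`. -/
private lemma ca_half (hchar : ringChar F ≠ 2) {v w : L} (h : v + v = w + w) : v = w := by
  have h2 : (2 : F) ≠ 0 := Ring.two_ne_zero hchar
  have h3 : (2 : F) • v = (2 : F) • w := by rw [two_smul, two_smul]; exact h
  exact smul_right_injective L h2 h3

/-- Symmetry of `⁅⁅⁅u,y⁆,z⁆,w⁆` in `(z,w)`, for `u` satisfying the F-identity. -/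
private lemma ca_theta_sym (hchar : ringChar F ≠ 2) (u : L)
    (hu : ∀ a m : L, ⁅u, ⁅a, m⁆⁆ = ⁅⁅u, a⁆, m⁆ + ⁅⁅u, a⁆, m⁆) (y z w : L) :
    ⁅⁅⁅u, y⁆, z⁆, w⁆ = ⁅⁅⁅u, y⁆, w⁆, z⁆ := by
  have f1 : ⁅u, ⁅y, z⁆⁆ = ⁅⁅u, y⁆, z⁆ + ⁅⁅u, y⁆, z⁆ := hu y z
  have f2 : ⁅u, ⁅y, w⁆⁆ = ⁅⁅u, y⁆, w⁆ + ⁅⁅u, y⁆, w⁆ := hu y w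
  have e1 : ⁅u, ⁅⁅y, z⁆, w⁆⁆
      = (⁅⁅⁅u, y⁆, z⁆, w⁆ + ⁅⁅⁅u, y⁆, z⁆, w⁆) + (⁅⁅⁅u, y⁆, z⁆, w⁆ + ⁅⁅⁅u, y⁆, z⁆, w⁆) := by
    rw [hu ⁅y, z⁆ w, f1, add_lie]
  have e2 : ⁅u, ⁅⁅y, w⁆, z⁆⁆
      = (⁅⁅⁅u, y⁆, w⁆, z⁆ + ⁅⁅⁅u, y⁆, w⁆, z⁆) + (⁅⁅⁅u, y⁆, w⁆, z⁆ + ⁅⁅⁅u, y⁆, w⁆, z⁆) := by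
    rw [hu ⁅y, w⁆ z, f2, add_lie]
  have g : ⁅⁅u, y⁆, ⁅z, w⁆⁆ = ⁅⁅⁅u, y⁆, z⁆, w⁆ - ⁅⁅⁅u, y⁆, w⁆, z⁆ := by
    rw [leibniz_lie ⁅u, y⁆ z w, (lie_skew z ⁅⁅u, y⁆, w⁆).symm]; abel
  have e3 : ⁅u, ⁅y, ⁅z, w⁆⁆⁆
      = (⁅⁅⁅u, y⁆, z⁆, w⁆ - ⁅⁅⁅u, y⁆, w⁆, z⁆) + (⁅⁅⁅u, y⁆, z⁆, w⁆ - ⁅⁅⁅u, y⁆, w⁆, z⁆) := by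
    rw [hu y ⁅z, w⁆, g]
  have jac : ⁅⁅y, w⁆, z⁆ = ⁅⁅y, z⁆, w⁆ - ⁅y, ⁅z, w⁆⁆ := by
    rw [leibniz_lie y z w, (lie_skew z ⁅y, w⁆).symm]; abel
  have key : ⁅u, ⁅⁅y, w⁆, z⁆⁆ = ⁅u, ⁅⁅y, z⁆, w⁆⁆ - ⁅u, ⁅y, ⁅z, w⁆⁆⁆ := by
    rw [jac, lie_sub]
  rw [e1, e2, e3] at key
  have k2 : (⁅⁅⁅u, y⁆, w⁆, z⁆ + ⁅⁅⁅u, y⁆, w⁆, z⁆) + (⁅⁅⁅u, y⁆, w⁆, z⁆ + ⁅⁅⁅u, y⁆, w⁆, z⁆)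
      = (⁅⁅⁅u, y⁆, z⁆, w⁆ + ⁅⁅⁅u, y⁆, z⁆, w⁆) + (⁅⁅⁅u, y⁆, w⁆, z⁆ + ⁅⁅⁅u, y⁆, w⁆, z⁆) := by
    rw [key]; abel
  have k3 : ⁅⁅⁅u, y⁆, w⁆, z⁆ + ⁅⁅⁅u, y⁆, w⁆, z⁆ = ⁅⁅⁅u, y⁆, z⁆, w⁆ + ⁅⁅⁅u, y⁆, z⁆, w⁆ :=
    add_right_cancel k2
  exact (ca_half hchar k3).symm

/-- Antisymmetry of `⁅⁅u,y⁆,z⁆` in `(y,z)`, for `u` satisfying the F-identity. -/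
private lemma ca_alt2 (hchar : ringChar F ≠ 2) (u : L)
    (hu : ∀ a m : L, ⁅u, ⁅a, m⁆⁆ = ⁅⁅u, a⁆, m⁆ + ⁅⁅u, a⁆, m⁆) (y z : L) :
    ⁅⁅u, y⁆, z⁆ = -⁅⁅u, z⁆, y⁆ := by
  have hz : ⁅u, ⁅y, z⁆⁆ + ⁅u, ⁅z, y⁆⁆ = 0 := by
    rw [← lie_add, ← lie_skew z y, add_neg_cancel, lie_zero]
  have hsum : (⁅⁅u, y⁆, z⁆ + ⁅⁅u, z⁆, y⁆) + (⁅⁅u, y⁆, z⁆ + ⁅⁅u, z⁆, y⁆) = 0 + 0 := by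
    have e : (⁅⁅u, y⁆, z⁆ + ⁅⁅u, z⁆, y⁆) + (⁅⁅u, y⁆, z⁆ + ⁅⁅u, z⁆, y⁆)
        = (⁅⁅u, y⁆, z⁆ + ⁅⁅u, y⁆, z⁆) + (⁅⁅u, z⁆, y⁆ + ⁅⁅u, z⁆, y⁆) := by abel
    rw [e, ← hu y z, ← hu z y, hz, add_zero]
  exact eq_neg_of_add_eq_zero_left (ca_half hchar hsum)

/-- The fourth-order identity: `⁅⁅⁅u,y⁆,z⁆,w⁆ = 0`. -/
private lemma ca_theta_zero (hchar : ringChar F ≠ 2) (u : L)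
    (hu : ∀ a m : L, ⁅u, ⁅a, m⁆⁆ = ⁅⁅u, a⁆, m⁆ + ⁅⁅u, a⁆, m⁆) (y z w : L) :
    ⁅⁅⁅u, y⁆, z⁆, w⁆ = 0 := by
  have c1 : ⁅⁅⁅u, y⁆, z⁆, w⁆ = -⁅⁅⁅u, y⁆, z⁆, w⁆ := by
    calc ⁅⁅⁅u, y⁆, z⁆, w⁆ = ⁅⁅⁅u, y⁆, w⁆, z⁆ := ca_theta_sym hchar u hu y z w
      _ = -⁅⁅⁅u, w⁆, y⁆, z⁆ := by rw [ca_alt2 hchar u hu y w, neg_lie]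
      _ = -⁅⁅⁅u, w⁆, z⁆, y⁆ := by rw [ca_theta_sym hchar u hu w y z]
      _ = ⁅⁅⁅u, z⁆, w⁆, y⁆ := by rw [ca_alt2 hchar u hu w z, neg_lie, neg_neg]
      _ = ⁅⁅⁅u, z⁆, y⁆, w⁆ := ca_theta_sym hchar u hu z w y
      _ = -⁅⁅⁅u, y⁆, z⁆, w⁆ := by rw [ca_alt2 hchar u hu z y, neg_lie]
  have c2 : ⁅⁅⁅u, y⁆, z⁆, w⁆ + ⁅⁅⁅u, y⁆, z⁆, w⁆ = 0 + 0 := by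
    nth_rewrite 2 [c1]
    rw [add_neg_cancel, add_zero]
  exact ca_half hchar c2

end CommutingAutAux2

section CommutingAutAux3

variable {F L : Type*} [Field F] [LieRing L] [LieAlgebra F L]

private lemma ca_selfneg (hchar : ringChar F ≠ 2) {v : L} (h : v = -v) : v = 0 := by
  have h2 : v + v = 0 + 0 := by nth_rewrite 2 [h]; rw [add_neg_cancel, add_zero]
  exact ca_half hchar h2

/-- Values `⁅⁅Cx,y⁆,z⁆` are central. -/
private lemma ca_mem_center (γ : L ≃ₗ⁅F⁆ L) (hγ : ∀ x : L, ⁅γ x, x⁆ = 0)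
    (hchar : ringChar F ≠ 2) (x y z : L) :
    ⁅⁅γ x - x, y⁆, z⁆ ∈ LieAlgebra.center F L := by
  refine (LieModule.mem_maxTrivSubmodule F L L _).mpr (fun w => ?_)
  have h0 : ⁅⁅⁅γ x - x, y⁆, z⁆, w⁆ = 0 :=
    ca_theta_zero hchar (γ x - x) (fun a m => ca_F γ hγ x a m) y z w
  rw [(lie_skew w ⁅⁅γ x - x, y⁆, z⁆).symm, h0, neg_zero]

/-- `⁅Cx, y⁆ ∈ Z₂`. -/
private lemma ca_mem_sc (γ : L ≃ₗ⁅F⁆ L) (hγ : ∀ x : L, ⁅γ x, x⁆ = 0)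
    (hchar : ringChar F ≠ 2) (x y : L) :
    ⁅γ x - x, y⁆ ∈ secondCenter F L :=
  fun z => ca_mem_center γ hγ hchar x y z

private lemma ca_alt1 (γ : L ≃ₗ⁅F⁆ L) (hγ : ∀ x : L, ⁅γ x, x⁆ = 0) (x y z : L) :
    ⁅⁅γ x - x, y⁆, z⁆ = -⁅⁅γ y - y, x⁆, z⁆ := by
  rw [ca_iC γ hγ x y, (lie_skew x (γ y - y)).symm, neg_lie]

private lemma ca_cyc (γ : L ≃ₗ⁅F⁆ L) (hγ : ∀ x : L, ⁅γ x, x⁆ = 0)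
    (hchar : ringChar F ≠ 2) (x y z : L) :
    ⁅⁅γ x - x, y⁆, z⁆ = ⁅⁅γ y - y, z⁆, x⁆ := by
  rw [ca_alt1 γ hγ x y z,
    ca_alt2 hchar (γ y - y) (fun a m => ca_F γ hγ y a m) x z, neg_neg]

private lemma ca_diag1 (γ : L ≃ₗ⁅F⁆ L) (hγ : ∀ x : L, ⁅γ x, x⁆ = 0)
    (hchar : ringChar F ≠ 2) (a b : L) :
    ⁅⁅γ a - a, b⁆, b⁆ = 0 := by
  apply ca_selfneg hchar
  exact ca_alt2 hchar (γ a - a) (fun p m => ca_F γ hγ a p m) b b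

private lemma ca_diag2 (γ : L ≃ₗ⁅F⁆ L) (hγ : ∀ x : L, ⁅γ x, x⁆ = 0)
    (hchar : ringChar F ≠ 2) (a b : L) :
    ⁅⁅γ a - a, b⁆, a⁆ = 0 := by
  rw [ca_cyc γ hγ hchar a b a]
  exact ca_diag1 γ hγ hchar b a

/-- Part II : with `dim Z₂ = dim Z + 2`, all values `⁅Cx, y⁆` are central. -/
private lemma ca_phi_zero [FiniteDimensional F L] (γ : L ≃ₗ⁅F⁆ L)
    (hγ : ∀ x : L, ⁅γ x, x⁆ = 0) (hchar : ringChar F ≠ 2)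
    (hdim : Module.finrank F ↥(secondCenter F L) =
      Module.finrank F ↥(LieAlgebra.center F L) + 2)
    (x y z : L) : ⁅⁅γ x - x, y⁆, z⁆ = 0 := by
  classical
  by_contra hc
  set Z2 : Submodule F L := (secondCenter F L).toSubmodule with hZ2
  set Zc : Submodule F L := ((LieAlgebra.center F L : LieSubmodule F L L) : Submodule F L)
    with hZc
  have hle : Zc ≤ Z2 := by
    intro v hv
    intro t
    have h0 : ⁅v, t⁆ = 0 := by
      rw [← lie_skew v t, (LieModule.mem_maxTrivSubmodule F L L v).mp hv t, neg_zero]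
    show ⁅v, t⁆ ∈ LieAlgebra.center F L
    rw [h0]; exact Submodule.zero_mem _
  set S : Submodule F Z2 := Zc.comap Z2.subtype with hS
  have hfr : Module.finrank F (Z2 ⧸ S) = 2 := by
    have h1 := Submodule.finrank_quotient_add_finrank S
    have h2 : Module.finrank F S = Module.finrank F Zc :=
      (Submodule.comapSubtypeEquivOfLe hle).finrank_eq
    have h3 : Module.finrank F Z2 = Module.finrank F Zc + 2 := hdim
    omega
  have hm : ∀ a b : L, ⁅γ a - a, b⁆ ∈ Z2 := fun a b => ca_mem_sc γ hγ hchar a b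
  set pe : Fin 3 → Z2 :=
    ![⟨⁅γ x - x, y⁆, hm x y⟩, ⟨⁅γ y - y, z⁆, hm y z⟩, ⟨⁅γ z - z, x⁆, hm z x⟩] with hpe
  have hni : ¬ LinearIndependent F (fun i => S.mkQ (pe i)) := by
    intro hli
    have hcard := hli.fintype_card_le_finrank
    rw [hfr, Fintype.card_fin] at hcard
    omega
  obtain ⟨g, hg, i0, hgi⟩ := Fintype.not_linearIndependent_iff.mp hni
  have hsum : S.mkQ (∑ i, g i • pe i) = 0 := by
    rw [map_sum]
    simpa [map_smul] using hg
  have hmemS : (∑ i, g i • pe i) ∈ S := by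
    rwa [Submodule.mkQ_apply, Submodule.Quotient.mk_eq_zero] at hsum
  have hvc : ((∑ i, g i • pe i : Z2) : L) ∈ LieAlgebra.center F L := hmemS
  have hcoe : ((∑ i, g i • pe i : Z2) : L)
      = g 0 • ⁅γ x - x, y⁆ + g 1 • ⁅γ y - y, z⁆ + g 2 • ⁅γ z - z, x⁆ := by
    rw [Fin.sum_univ_three]
    simp [hpe]
  have hbr : ∀ t : L,
      g 0 • ⁅⁅γ x - x, y⁆, t⁆ + g 1 • ⁅⁅γ y - y, z⁆, t⁆ + g 2 • ⁅⁅γ z - z, x⁆, t⁆ = 0 := by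
    intro t
    have h1 : ⁅t, ((∑ i, g i • pe i : Z2) : L)⁆ = 0 :=
      (LieModule.mem_maxTrivSubmodule F L L _).mp hvc t
    have h2 : ⁅((∑ i, g i • pe i : Z2) : L), t⁆ = 0 := by
      rw [← lie_skew, h1, neg_zero]
    rw [hcoe] at h2
    simpa [add_lie, smul_lie] using h2
  -- evaluate at z
  have hg0 : g 0 = 0 := by
    have h := hbr z
    rw [ca_diag1 γ hγ hchar y z, ca_diag2 γ hγ hchar z x] at h
    simp only [smul_zero, add_zero] at h
    rcases smul_eq_zero.mp h with h' | h'
    · exact h'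
    · exact absurd h' hc
  have hg1 : g 1 = 0 := by
    have h := hbr x
    rw [ca_diag2 γ hγ hchar x y, ca_diag1 γ hγ hchar z x] at h
    have hcyc2 : ⁅⁅γ y - y, z⁆, x⁆ = ⁅⁅γ x - x, y⁆, z⁆ :=
      (ca_cyc γ hγ hchar x y z).symm
    rw [hcyc2] at h
    simp only [smul_zero, add_zero, zero_add] at h
    rcases smul_eq_zero.mp h with h' | h'
    · exact h'
    · exact absurd h' hc
  have hg2 : g 2 = 0 := by
    have h := hbr y
    rw [ca_diag1 γ hγ hchar x y, ca_diag2 γ hγ hchar y z] at h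
    have hcyc1 : ⁅⁅γ z - z, x⁆, y⁆ = ⁅⁅γ x - x, y⁆, z⁆ := by
      rw [ca_cyc γ hγ hchar x y z]
      exact (ca_cyc γ hγ hchar y z x).symm
    rw [hcyc1] at h
    simp only [smul_zero, add_zero, zero_add] at h
    rcases smul_eq_zero.mp h with h' | h'
    · exact h'
    · exact absurd h' hc
  fin_cases i0 <;> simp_all

end CommutingAutAux3

section CommutingAutAux4

variable {F L : Type*} [Field F] [LieRing L] [LieAlgebra F L]

/-- All values `⁅Cx, y⁆` are central (restatement of `ca_phi_zero`). -/
private lemma ca_val_central [FiniteDimensional F L] (γ : L ≃ₗ⁅F⁆ L)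
    (hγ : ∀ x : L, ⁅γ x, x⁆ = 0) (hchar : ringChar F ≠ 2)
    (hdim : Module.finrank F ↥(secondCenter F L) =
      Module.finrank F ↥(LieAlgebra.center F L) + 2)
    (x y : L) : ⁅γ x - x, y⁆ ∈ LieAlgebra.center F L := by
  refine (LieModule.mem_maxTrivSubmodule F L L _).mpr (fun w => ?_)
  rw [← lie_skew, ca_phi_zero γ hγ hchar hdim x y w, neg_zero]

theorem comp_commuting_of_second_center_codim_two_center_term_lcs' {F L : Type*} [Field F]
    [LieRing L] [LieAlgebra F L] [FiniteDimensional F L]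
    (hchar : ringChar F ≠ 2)
    (hdim : Module.finrank F ↥(secondCenter F L) =
      Module.finrank F ↥(LieAlgebra.center F L) + 2)
    (α β : L ≃ₗ⁅F⁆ L) (hα : ∀ x : L, ⁅α x, x⁆ = 0) (hβ : ∀ x : L, ⁅β x, x⁆ = 0) :
    ∀ x : L, ⁅β (α x), x⁆ = 0 := by
  classical
  intro x
  have polβ : ⁅β (α x), x⁆ = ⁅α x, β x⁆ := ca_pol β hβ (α x) x
  have hx2 : ⁅x, β x⁆ = 0 := by rw [← lie_skew, hβ x, neg_zero]
  have hred : ⁅α x, β x⁆ = ⁅α x - x, β x - x⁆ := by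
    rw [lie_sub, sub_lie, sub_lie, hα x, hx2, lie_self]; abel
  rw [polβ, hred]
  by_cases hcase : ∀ p q : L, (∀ t, ⁅p, t⁆ ∈ LieAlgebra.center F L) →
      (∀ t, ⁅q, t⁆ ∈ LieAlgebra.center F L) → ⁅p, q⁆ = 0
  · exact hcase (α x - x) (β x - x)
      (fun t => ca_val_central α hα hchar hdim x t)
      (fun t => ca_val_central β hβ hchar hdim x t)
  push_neg at hcase
  obtain ⟨u0, v0, hu0, hv0, hne⟩ := hcase
  set w : L := β x - x with hwdef
  by_cases hwc : w ∈ LieAlgebra.center F L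
  · exact (LieModule.mem_maxTrivSubmodule F L L w).mp hwc (α x - x)
  -- quotient setup
  set Z2 : Submodule F L := (secondCenter F L).toSubmodule with hZ2
  set Zc : Submodule F L := ((LieAlgebra.center F L : LieSubmodule F L L) : Submodule F L)
    with hZc
  have hle : Zc ≤ Z2 := by
    intro v hv t
    have h0 : ⁅v, t⁆ = 0 := by
      rw [← lie_skew v t, (LieModule.mem_maxTrivSubmodule F L L v).mp hv t, neg_zero]
    show ⁅v, t⁆ ∈ LieAlgebra.center F L
    rw [h0]; exact Submodule.zero_mem _
  set S : Submodule F Z2 := Zc.comap Z2.subtype with hS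
  have hfr : Module.finrank F (Z2 ⧸ S) = 2 := by
    have h1 := Submodule.finrank_quotient_add_finrank S
    have h2 : Module.finrank F S = Module.finrank F Zc :=
      (Submodule.comapSubtypeEquivOfLe hle).finrank_eq
    have h3 : Module.finrank F Z2 = Module.finrank F Zc + 2 := hdim
    omega
  set aw : L := α w - w with hawdef
  have hawZ2 : aw ∈ Z2 := fun t => ca_val_central α hα hchar hdim w t
  have hwZ2 : w ∈ Z2 := fun t => ca_val_central β hβ hchar hdim x t
  have hzw : ⁅aw, w⁆ = 0 := by rw [hawdef, sub_lie, hα w, lie_self, sub_zero]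
  have hwaw : ⁅w, aw⁆ = 0 := by rw [← lie_skew, hzw, neg_zero]
  set q1 : Z2 ⧸ S := S.mkQ ⟨aw, hawZ2⟩ with hq1
  set q2 : Z2 ⧸ S := S.mkQ ⟨w, hwZ2⟩ with hq2
  have hgoal : ⁅α x - x, w⁆ = ⁅x, aw⁆ := by rw [hawdef]; exact ca_iC α hα x w
  by_cases hdep : ∃ c : F, q1 = c • q2
  · obtain ⟨c, hcq⟩ := hdep
    have hζ : aw - c • w ∈ LieAlgebra.center F L := by
      have hmq : S.mkQ (⟨aw, hawZ2⟩ - c • ⟨w, hwZ2⟩) = 0 := by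
        rw [map_sub, map_smul, ← hq1, ← hq2, hcq, sub_self]
      rw [Submodule.mkQ_apply, Submodule.Quotient.mk_eq_zero] at hmq
      exact hmq
    have hsplit : ⁅x, aw⁆ = c • ⁅x, w⁆ + ⁅x, aw - c • w⁆ := by
      rw [← lie_smul, ← lie_add]
      congr 1
      abel
    have hxw : ⁅x, w⁆ = 0 := by
      rw [hwdef, lie_sub, hx2, lie_self, sub_self]
    rw [hgoal, hsplit, hxw, smul_zero, zero_add]
    exact (LieModule.mem_maxTrivSubmodule F L L _).mp hζ x
  · push_neg at hdep
    exfalso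
    have hq2ne : q2 ≠ 0 := by
      intro h0
      rw [hq2, Submodule.mkQ_apply, Submodule.Quotient.mk_eq_zero] at h0
      exact hwc h0
    have hind : LinearIndependent F ![q1, q2] := by
      rw [linearIndependent_fin2]
      constructor
      · simpa using hq2ne
      · intro a ha
        simp only [Matrix.cons_val_one, Matrix.head_cons, Matrix.cons_val_zero] at ha
        exact hdep a ha.symm
    have hspan : Submodule.span F (Set.range ![q1, q2]) = ⊤ :=
      hind.span_eq_top_of_card_eq_finrank (by rw [Fintype.card_fin, hfr])
    have hrange : Set.range ![q1, q2] = {q1, q2} := by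
      simp only [Matrix.range_cons, Matrix.range_empty, Set.union_empty,
        Set.union_singleton]
      exact Set.pair_comm q2 q1
    have hmem : ∀ p : L, ∀ hp : p ∈ Z2, ∃ a b : F,
        a • aw + b • w - p ∈ LieAlgebra.center F L := by
      intro p hp
      have h1 : S.mkQ ⟨p, hp⟩ ∈ Submodule.span F ({q1, q2} : Set (Z2 ⧸ S)) := by
        rw [← hrange, hspan]
        exact Submodule.mem_top
      obtain ⟨a, b, hab⟩ := Submodule.mem_span_pair.mp h1
      refine ⟨a, b, ?_⟩
      have hmq : S.mkQ (a • ⟨aw, hawZ2⟩ + b • ⟨w, hwZ2⟩ - ⟨p, hp⟩) = 0 := by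
        rw [map_sub, map_add, map_smul, map_smul, ← hq1, ← hq2, hab, sub_self]
      rw [Submodule.mkQ_apply, Submodule.Quotient.mk_eq_zero] at hmq
      exact hmq
    obtain ⟨a, b, hζ1⟩ := hmem u0 hu0
    obtain ⟨c, d, hζ2⟩ := hmem v0 hv0
    have hz1 : ∀ t : L, ⁅a • aw + b • w - u0, t⁆ = 0 := by
      intro t
      rw [← lie_skew, (LieModule.mem_maxTrivSubmodule F L L _).mp hζ1 t, neg_zero]
    have hz2 : ∀ t : L, ⁅t, c • aw + d • w - v0⁆ = 0 := fun t =>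
      (LieModule.mem_maxTrivSubmodule F L L _).mp hζ2 t
    apply hne
    have hu0e : u0 = (a • aw + b • w) - (a • aw + b • w - u0) := by abel
    have hv0e : v0 = (c • aw + d • w) - (c • aw + d • w - v0) := by abel
    calc ⁅u0, v0⁆ = ⁅(a • aw + b • w) - (a • aw + b • w - u0),
          (c • aw + d • w) - (c • aw + d • w - v0)⁆ := by rw [← hu0e, ← hv0e]
      _ = 0 := by
          rw [sub_lie, hz1, sub_zero, lie_sub, hz2, sub_zero]
          simp [add_lie, lie_add, smul_lie, lie_smul, hzw, hwaw, lie_self]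

end CommutingAutAux4

/-- Let `L` be a finite-dimensional nilpotent Lie algebra over a field `𝔽` of characteristic
different from `2` with `dim Z₂(L) − dim Z(L) = 2` and `Z(L) = L^k` (the `k`-th term of the
lower central series) for some `k ≥ 1`. Then the composite of any two commuting automorphisms
of `L` is again a commuting automorphism. -/
theorem comp_commuting_of_second_center_codim_two_center_term_lcs {F L : Type*} [Field F]
    [LieRing L] [LieAlgebra F L] [FiniteDimensional F L] [LieRing.IsNilpotent L]
    (hchar : ringChar F ≠ 2)
    (hdim : Module.finrank F ↥(secondCenter F L) =
      Module.finrank F ↥(LieAlgebra.center F L) + 2)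
    (k : ℕ) (hk : 1 ≤ k)
    (hZ : (LieAlgebra.center F L : LieSubmodule F L L) = LieModule.lowerCentralSeries F L L k)
    (α β : L ≃ₗ⁅F⁆ L) (hα : ∀ x : L, ⁅α x, x⁆ = 0) (hβ : ∀ x : L, ⁅β x, x⁆ = 0) :
    ∀ x : L, ⁅β (α x), x⁆ = 0 :=
  comp_commuting_of_second_center_codim_two_center_term_lcs' hchar hdim α β hα hβ
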